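/- For every p ∈ H* and all h, l ∈ H one has λ(h l₁)·p(l₂) = p(S⁻¹(h₂)·a⁻¹)·λ(h₁ l) and p(l₁)·λ(l₂ h) = p(S⁻¹(h₁))·λ(l h₂); in other words, (λ↼h)*p = λ↼(p(S⁻¹(h₂)a⁻¹)h₁) and p*(h⇀λ) = (p(S⁻¹(h₁))h₂)⇀λ, where (λ↼h)(l) = λ(hl) and (h⇀λ)(l) = λ(lh). -/

import Mathlib

open TensorProduct Coalgebra HopfAlgebra

variable {k H : Type*} [Field k] [Ring H] [HopfAlgebra k H]

/-- The antipode of `H`, as a linear map. -/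
local notation "𝐒" => HopfAlgebra.antipode (R := k)

/-- Convolution product on the dual of `H`: `(conv f g) h = f h₁ * g h₂`. -/
noncomputable def conv (f g : H →ₗ[k] k) : H →ₗ[k] k :=
  (LinearMap.mul' k k) ∘ₗ (TensorProduct.map f g) ∘ₗ (Coalgebra.comul (R := k))

/-- `h ↦ f h₁ • h₂`. -/
noncomputable def lT (f : H →ₗ[k] k) : H →ₗ[k] H :=
  (TensorProduct.lid k H).toLinearMap ∘ₗ (f.rTensor H) ∘ₗ (Coalgebra.comul (R := k))

/-- The Sweedler sum `h ↦ f h₁ • p h₃ • g h₂`. -/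
noncomputable def sw3 (f : H →ₗ[k] k) (g : H →ₗ[k] H) (p : H →ₗ[k] k) : H →ₗ[k] H :=
  (TensorProduct.lid k H).toLinearMap
    ∘ₗ (TensorProduct.rid k (k ⊗[k] H)).toLinearMap
    ∘ₗ (TensorProduct.map (TensorProduct.map f g) p)
    ∘ₗ ((Coalgebra.comul (R := k)).rTensor H)
    ∘ₗ (Coalgebra.comul (R := k))

/-- `χ(h) = α(h₂) • S⁻²(h₁)`, the generalized Nakayama automorphism. -/
noncomputable def chiMap (Sinv : H →ₗ[k] H) (f : H →ₗ[k] k) : H →ₗ[k] H :=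
  (TensorProduct.rid k H).toLinearMap
    ∘ₗ (TensorProduct.map (Sinv ∘ₗ Sinv) f)
    ∘ₗ (Coalgebra.comul (R := k))

/-- `f(R¹) • R²` for `R = R¹ ⊗ R² ∈ H ⊗ H`. -/
noncomputable def lap (f : H →ₗ[k] k) : (H ⊗[k] H) →ₗ[k] H :=
  (TensorProduct.lid k H).toLinearMap ∘ₗ (f.rTensor H)

/-- `f(R²) • R¹` for `R = R¹ ⊗ R² ∈ H ⊗ H`. -/
noncomputable def rap (f : H →ₗ[k] k) : (H ⊗[k] H) →ₗ[k] H :=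
  (TensorProduct.rid k H).toLinearMap ∘ₗ (LinearMap.lTensor H f)

/-- The Drinfeld element `u = S(R²)R¹`. -/
noncomputable def uElt (Rm : H ⊗[k] H) : H :=
  (LinearMap.mul' k H)
    ((TensorProduct.comm k H H)
      ((LinearMap.lTensor H (HopfAlgebra.antipode (R := k))) Rm))

/-- Convolution product on the dual of `H ⊗ H`. -/
noncomputable def conv2 (f g : (H ⊗[k] H) →ₗ[k] k) : (H ⊗[k] H) →ₗ[k] k :=
  (LinearMap.mul' k k) ∘ₗ (TensorProduct.map f g) ∘ₗ (Coalgebra.comul (R := k) (A := H ⊗[k] H))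

/-- `(h ⊗ l) ↦ σ(h₂ ⊗ l₂) • (l₁ * h₁)`. -/
noncomputable def ac1 (σ : (H ⊗[k] H) →ₗ[k] k) : (H ⊗[k] H) →ₗ[k] H :=
  (TensorProduct.rid k H).toLinearMap
    ∘ₗ (TensorProduct.map ((LinearMap.mul' k H) ∘ₗ (TensorProduct.comm k H H).toLinearMap) σ)
    ∘ₗ (TensorProduct.tensorTensorTensorComm k H H H H).toLinearMap
    ∘ₗ (TensorProduct.map (Coalgebra.comul (R := k)) (Coalgebra.comul (R := k)))

/-- `(h ⊗ l) ↦ σ(h₁ ⊗ l₁) • (h₂ * l₂)`. -/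
noncomputable def ac2 (σ : (H ⊗[k] H) →ₗ[k] k) : (H ⊗[k] H) →ₗ[k] H :=
  (TensorProduct.lid k H).toLinearMap
    ∘ₗ (TensorProduct.map σ (LinearMap.mul' k H))
    ∘ₗ (TensorProduct.tensorTensorTensorComm k H H H H).toLinearMap
    ∘ₗ (TensorProduct.map (Coalgebra.comul (R := k)) (Coalgebra.comul (R := k)))

/-- `(h ⊗ l) ↦ ρ(h₁ ⊗ l₁) * lam(h₂ * l₂) * τ(h₃ ⊗ l₃)`. -/
noncomputable def trip (lam : H →ₗ[k] k) (ρ τ : (H ⊗[k] H) →ₗ[k] k) : (H ⊗[k] H) →ₗ[k] k :=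
  (LinearMap.mul' k k)
    ∘ₗ ((LinearMap.mul' k k).rTensor k)
    ∘ₗ (TensorProduct.map (TensorProduct.map ρ (lam ∘ₗ (LinearMap.mul' k H))) τ)
    ∘ₗ ((TensorProduct.tensorTensorTensorComm k H H H H).toLinearMap.rTensor (H ⊗[k] H))
    ∘ₗ (TensorProduct.tensorTensorTensorComm k (H ⊗[k] H) H (H ⊗[k] H) H).toLinearMap
    ∘ₗ (TensorProduct.map
          (((Coalgebra.comul (R := k)).rTensor H) ∘ₗ (Coalgebra.comul (R := k)))
          (((Coalgebra.comul (R := k)).rTensor H) ∘ₗ (Coalgebra.comul (R := k))))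

/-- `u(h) = σ(h₂ ⊗ S h₁)`. -/
noncomputable def uF (σ : (H ⊗[k] H) →ₗ[k] k) : H →ₗ[k] k :=
  σ ∘ₗ (TensorProduct.comm k H H).toLinearMap
    ∘ₗ ((HopfAlgebra.antipode (R := k)).rTensor H) ∘ₗ (Coalgebra.comul (R := k))

/-- `v(h) = σ(h₁ ⊗ S h₂)`. -/
noncomputable def vF (σ : (H ⊗[k] H) →ₗ[k] k) : H →ₗ[k] k :=
  σ ∘ₗ (LinearMap.lTensor H (HopfAlgebra.antipode (R := k))) ∘ₗ (Coalgebra.comul (R := k))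

/-- `u⁻¹(h) = σ(S²(h₂) ⊗ h₁)`. -/
noncomputable def uinvF (σ : (H ⊗[k] H) →ₗ[k] k) : H →ₗ[k] k :=
  σ ∘ₗ (((HopfAlgebra.antipode (R := k)) ∘ₗ (HopfAlgebra.antipode (R := k))).rTensor H)
    ∘ₗ (TensorProduct.comm k H H).toLinearMap ∘ₗ (Coalgebra.comul (R := k))

/-- `v⁻¹(h) = σ(S²(h₁) ⊗ h₂)`. -/
noncomputable def vinvF (σ : (H ⊗[k] H) →ₗ[k] k) : H →ₗ[k] k :=
  σ ∘ₗ (((HopfAlgebra.antipode (R := k)) ∘ₗ (HopfAlgebra.antipode (R := k))).rTensor H)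
    ∘ₗ (Coalgebra.comul (R := k))


/-- Representation of the comultiplication of a product. -/
noncomputable def reprMul {x y : H} {ιx ιy : Type*} (rx : Coalgebra.Repr k x ιx)
    (ry : Coalgebra.Repr k y ιy) :
    Coalgebra.Repr k (x * y) (ιx × ιy) where
  index := rx.index ×ˢ ry.index
  left p := rx.left p.1 * ry.left p.2
  right p := rx.right p.1 * ry.right p.2
  eq := by
    rw [Bialgebra.comul_mul, ← rx.eq, ← ry.eq, Finset.sum_mul_sum, Finset.sum_product]
    simp [Algebra.TensorProduct.tmul_mul_tmul]

lemma sum_counit_smul_left {x : H} {ι : Type*} (r : Coalgebra.Repr k x ι) :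
    ∑ i ∈ r.index, Coalgebra.counit (R := k) (r.right i) • r.left i = x := by
  have := congrArg (TensorProduct.rid k H) (Coalgebra.sum_tmul_counit_eq r)
  simp only [map_sum, TensorProduct.rid_tmul] at this
  simpa using this

lemma sum_counit_smul_right {x : H} {ι : Type*} (r : Coalgebra.Repr k x ι) :
    ∑ i ∈ r.index, Coalgebra.counit (R := k) (r.left i) • r.right i = x := by
  have := congrArg (TensorProduct.lid k H) (Coalgebra.sum_counit_tmul_eq r)
  simp only [map_sum, TensorProduct.lid_tmul] at this
  simpa using this

/-- Convolution product on bilinear maps `H → H → H`, i.e. on `Hom(H ⊗ H, H)`. -/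
noncomputable def cvb (f g : H →ₗ[k] H →ₗ[k] H) : H →ₗ[k] H →ₗ[k] H :=
  LinearMap.compl₁₂
    (TensorProduct.curry ((LinearMap.mul' k H)
      ∘ₗ (TensorProduct.map (TensorProduct.lift f) (TensorProduct.lift g))
      ∘ₗ (TensorProduct.tensorTensorTensorComm k H H H H).toLinearMap))
    (Coalgebra.comul (R := k)) (Coalgebra.comul (R := k))

lemma cvb_apply (f g : H →ₗ[k] H →ₗ[k] H) {x y : H}
    {ιx ιy : Type*} (rx : Coalgebra.Repr k x ιx) (ry : Coalgebra.Repr k y ιy) :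
    cvb f g x y = ∑ i ∈ rx.index, ∑ m ∈ ry.index,
      f (rx.left i) (ry.left m) * g (rx.right i) (ry.right m) := by
  simp only [cvb, LinearMap.compl₁₂_apply, TensorProduct.curry_apply]
  rw [← rx.eq, ← ry.eq, TensorProduct.sum_tmul]
  simp [TensorProduct.tmul_sum, Finset.mul_sum, Finset.sum_mul]

/-- Bilinear counit unit for `cvb`. -/
noncomputable def ebH : H →ₗ[k] H →ₗ[k] H :=
  LinearMap.compr₂
    (LinearMap.compl₁₂ (LinearMap.mul k k) (Coalgebra.counit (R := k) (A := H))
      (Coalgebra.counit (R := k) (A := H)))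
    (Algebra.linearMap k H)

lemma ebH_apply (x y : H) :
    ebH (k := k) x y = (Coalgebra.counit (R := k) x * Coalgebra.counit (R := k) y) • (1 : H) := by
  simp [ebH, Algebra.algebraMap_eq_smul_one]

lemma cvb_unit_right (f : H →ₗ[k] H →ₗ[k] H) : cvb f (ebH (k := k)) = f := by
  ext x y
  rw [cvb_apply f (ebH (k := k)) (ℛ k x) (ℛ k y)]
  simp only [ebH_apply]
  have step : ∀ i m, f ((ℛ k x).left i) ((ℛ k y).left m) *
      ((Coalgebra.counit (R := k) ((ℛ k x).right i) *
        Coalgebra.counit (R := k) ((ℛ k y).right m)) • (1 : H)) =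
      Coalgebra.counit (R := k) ((ℛ k x).right i) •
        Coalgebra.counit (R := k) ((ℛ k y).right m) •
          f ((ℛ k x).left i) ((ℛ k y).left m) := by
    intro i m
    rw [mul_smul_comm, mul_one, mul_smul]
  simp only [step]
  have hy := sum_counit_smul_left (ℛ k y)
  have hx := sum_counit_smul_left (ℛ k x)
  calc ∑ i ∈ (ℛ k x).index, ∑ m ∈ (ℛ k y).index,
        Coalgebra.counit (R := k) ((ℛ k x).right i) •
          Coalgebra.counit (R := k) ((ℛ k y).right m) •
            f ((ℛ k x).left i) ((ℛ k y).left m)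
      = ∑ i ∈ (ℛ k x).index, Coalgebra.counit (R := k) ((ℛ k x).right i) •
          f ((ℛ k x).left i) (∑ m ∈ (ℛ k y).index,
            Coalgebra.counit (R := k) ((ℛ k y).right m) • (ℛ k y).left m) := by
        refine Finset.sum_congr rfl fun i _ => ?_
        rw [map_sum, Finset.smul_sum]
        simp
    _ = ∑ i ∈ (ℛ k x).index, Coalgebra.counit (R := k) ((ℛ k x).right i) •
          f ((ℛ k x).left i) y := by rw [hy]
    _ = f x y := by
        conv_rhs => rw [← hx]
        simp only [map_sum, LinearMap.coe_sum, Finset.sum_apply, map_smul,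
          LinearMap.smul_apply]

lemma cvb_unit_left (f : H →ₗ[k] H →ₗ[k] H) : cvb (ebH (k := k)) f = f := by
  ext x y
  rw [cvb_apply (ebH (k := k)) f (ℛ k x) (ℛ k y)]
  simp only [ebH_apply]
  have step : ∀ i m, ((Coalgebra.counit (R := k) ((ℛ k x).left i) *
        Coalgebra.counit (R := k) ((ℛ k y).left m)) • (1 : H)) *
      f ((ℛ k x).right i) ((ℛ k y).right m) =
      Coalgebra.counit (R := k) ((ℛ k x).left i) •
        Coalgebra.counit (R := k) ((ℛ k y).left m) •
          f ((ℛ k x).right i) ((ℛ k y).right m) := by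
    intro i m
    rw [smul_mul_assoc, one_mul, mul_smul]
  simp only [step]
  have hy := sum_counit_smul_right (ℛ k y)
  have hx := sum_counit_smul_right (ℛ k x)
  calc ∑ i ∈ (ℛ k x).index, ∑ m ∈ (ℛ k y).index,
        Coalgebra.counit (R := k) ((ℛ k x).left i) •
          Coalgebra.counit (R := k) ((ℛ k y).left m) •
            f ((ℛ k x).right i) ((ℛ k y).right m)
      = ∑ i ∈ (ℛ k x).index, Coalgebra.counit (R := k) ((ℛ k x).left i) •
          f ((ℛ k x).right i) (∑ m ∈ (ℛ k y).index,
            Coalgebra.counit (R := k) ((ℛ k y).left m) • (ℛ k y).right m) := by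
        refine Finset.sum_congr rfl fun i _ => ?_
        rw [map_sum, Finset.smul_sum]
        simp
    _ = ∑ i ∈ (ℛ k x).index, Coalgebra.counit (R := k) ((ℛ k x).left i) •
          f ((ℛ k x).right i) y := by rw [hy]
    _ = f x y := by
        conv_rhs => rw [← hx]
        simp only [map_sum, LinearMap.coe_sum, Finset.sum_apply, map_smul,
          LinearMap.smul_apply]

/-- Six-fold evaluation map used in the associativity proof. -/
noncomputable def Phi3 (f g h : H →ₗ[k] H →ₗ[k] H) :
    (H ⊗[k] (H ⊗[k] H)) ⊗[k] (H ⊗[k] (H ⊗[k] H)) →ₗ[k] H :=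
  (LinearMap.mul' k H)
    ∘ₗ (TensorProduct.map (TensorProduct.lift f)
        ((LinearMap.mul' k H)
          ∘ₗ (TensorProduct.map (TensorProduct.lift g) (TensorProduct.lift h))
          ∘ₗ (TensorProduct.tensorTensorTensorComm k H H H H).toLinearMap))
    ∘ₗ (TensorProduct.tensorTensorTensorComm k H (H ⊗[k] H) H (H ⊗[k] H)).toLinearMap

lemma Phi3_tmul (f g h : H →ₗ[k] H →ₗ[k] H) (a1 a2 a3 b1 b2 b3 : H) :
    Phi3 f g h ((a1 ⊗ₜ[k] (a2 ⊗ₜ[k] a3)) ⊗ₜ[k] (b1 ⊗ₜ[k] (b2 ⊗ₜ[k] b3)))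
      = f a1 b1 * (g a2 b2 * h a3 b3) := by
  simp [Phi3, TensorProduct.tensorTensorTensorComm_tmul]

lemma sum4_swap {A B C D M : Type*} [AddCommMonoid M] {s : Finset A} {t : Finset B}
    {u : A → Finset C} {v : B → Finset D} (F : A → C → B → D → M) :
    ∑ a ∈ s, ∑ c ∈ u a, ∑ b ∈ t, ∑ d ∈ v b, F a c b d
      = ∑ b ∈ t, ∑ d ∈ v b, ∑ a ∈ s, ∑ c ∈ u a, F a c b d :=
  (Finset.sum_congr rfl fun _ _ => Finset.sum_comm).trans <|
    Finset.sum_comm.trans <|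
      (Finset.sum_congr rfl fun _ _ => Finset.sum_congr rfl fun _ _ => Finset.sum_comm).trans <|
        Finset.sum_congr rfl fun _ _ => Finset.sum_comm

lemma cvb_assoc (f g h : H →ₗ[k] H →ₗ[k] H) :
    cvb (cvb f g) h = cvb f (cvb g h) := by
  ext x y
  have kx := Coalgebra.sum_tmul_tmul_eq (R := k) (ℛ k x)
    (fun i => ℛ k ((ℛ k x).left i)) (fun i => ℛ k ((ℛ k x).right i))
  have ky := Coalgebra.sum_tmul_tmul_eq (R := k) (ℛ k y)
    (fun m => ℛ k ((ℛ k y).left m)) (fun m => ℛ k ((ℛ k y).right m))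
  have key := congrArg (Phi3 f g h) (congrArg₂ (· ⊗ₜ[k] ·) kx ky)
  simp only [TensorProduct.sum_tmul, map_sum] at key
  simp only [TensorProduct.tmul_sum, map_sum] at key
  simp only [Phi3_tmul] at key
  rw [cvb_apply (cvb f g) h (ℛ k x) (ℛ k y), cvb_apply f (cvb g h) (ℛ k x) (ℛ k y)]
  have L1 : ∀ i m, cvb f g ((ℛ k x).left i) ((ℛ k y).left m) =
      ∑ j ∈ (ℛ k ((ℛ k x).left i)).index, ∑ n ∈ (ℛ k ((ℛ k y).left m)).index,
        f ((ℛ k ((ℛ k x).left i)).left j) ((ℛ k ((ℛ k y).left m)).left n) *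
          g ((ℛ k ((ℛ k x).left i)).right j) ((ℛ k ((ℛ k y).left m)).right n) :=
    fun i m => cvb_apply f g (ℛ k ((ℛ k x).left i)) (ℛ k ((ℛ k y).left m))
  have R1 : ∀ i m, cvb g h ((ℛ k x).right i) ((ℛ k y).right m) =
      ∑ j ∈ (ℛ k ((ℛ k x).right i)).index, ∑ n ∈ (ℛ k ((ℛ k y).right m)).index,
        g ((ℛ k ((ℛ k x).right i)).left j) ((ℛ k ((ℛ k y).right m)).left n) *
          h ((ℛ k ((ℛ k x).right i)).right j) ((ℛ k ((ℛ k y).right m)).right n) :=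
    fun i m => cvb_apply g h (ℛ k ((ℛ k x).right i)) (ℛ k ((ℛ k y).right m))
  simp only [L1, R1, Finset.sum_mul, Finset.mul_sum, mul_assoc]
  refine Eq.trans (Finset.sum_congr rfl fun i _ => Finset.sum_comm)
    (Eq.trans ?_ (Finset.sum_congr rfl fun i _ => Finset.sum_comm))
  exact key

lemma antipode_one' : 𝐒 (1 : H) = 1 := by
  let r : Coalgebra.Repr k (1 : H) Unit :=
    { index := Finset.univ, left := fun _ => 1, right := fun _ => 1,
      eq := by simp [Bialgebra.comul_one, Algebra.TensorProduct.one_def] }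
  have := HopfAlgebra.sum_antipode_mul_eq_smul (R := k) r
  simpa [r] using this

noncomputable def sigmaB : H →ₗ[k] H →ₗ[k] H := (LinearMap.mul k H).compr₂ 𝐒

noncomputable def muB : H →ₗ[k] H →ₗ[k] H := LinearMap.mul k H

noncomputable def nuB : H →ₗ[k] H →ₗ[k] H := (LinearMap.mul k H).flip.compl₁₂ 𝐒 𝐒

lemma cvb_sigma_mu : cvb (sigmaB (k := k) (H := H)) muB = ebH := by
  ext x y
  rw [cvb_apply sigmaB muB (ℛ k x) (ℛ k y), ebH_apply]
  simp only [sigmaB, muB, LinearMap.compr₂_apply, LinearMap.mul_apply']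
  have := HopfAlgebra.sum_antipode_mul_eq_smul (R := k) (reprMul (ℛ k x) (ℛ k y))
  simp only [reprMul] at this
  rw [Finset.sum_product] at this
  rw [this, Bialgebra.counit_mul]

lemma cvb_mu_nu : cvb (muB (k := k) (H := H)) nuB = ebH := by
  ext x y
  rw [cvb_apply muB nuB (ℛ k x) (ℛ k y), ebH_apply]
  simp only [muB, nuB, LinearMap.compl₁₂_apply, LinearMap.flip_apply, LinearMap.mul_apply']
  calc ∑ i ∈ (ℛ k x).index, ∑ m ∈ (ℛ k y).index,
        ((ℛ k x).left i * (ℛ k y).left m) * (𝐒 ((ℛ k y).right m) * 𝐒 ((ℛ k x).right i))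
      = ∑ i ∈ (ℛ k x).index, (ℛ k x).left i *
          ∑ m ∈ (ℛ k y).index,
            ((ℛ k y).left m * 𝐒 ((ℛ k y).right m)) * 𝐒 ((ℛ k x).right i) := by
        simp [mul_assoc, Finset.mul_sum]
    _ = ∑ i ∈ (ℛ k x).index, (ℛ k x).left i *
          ((Coalgebra.counit (R := k) y • (1 : H)) * 𝐒 ((ℛ k x).right i)) := by
        refine Finset.sum_congr rfl fun i _ => ?_
        rw [← Finset.sum_mul, HopfAlgebra.sum_mul_antipode_eq_smul (ℛ k y)]
    _ = Coalgebra.counit (R := k) y • ∑ i ∈ (ℛ k x).index,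
          (ℛ k x).left i * 𝐒 ((ℛ k x).right i) := by
        simp only [Finset.smul_sum, smul_mul_assoc, one_mul, mul_smul_comm]
    _ = (Coalgebra.counit (R := k) x * Coalgebra.counit (R := k) y) • (1 : H) := by
        rw [HopfAlgebra.sum_mul_antipode_eq_smul (ℛ k x), mul_comm, mul_smul]

lemma antipode_mul' (x y : H) : 𝐒 (x * y) = 𝐒 y * 𝐒 x := by
  have hσ : sigmaB (k := k) (H := H) = nuB := by
    calc sigmaB (k := k) (H := H) = cvb sigmaB (ebH (k := k)) := (cvb_unit_right _).symm
      _ = cvb sigmaB (cvb muB nuB) := by rw [cvb_mu_nu]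
      _ = cvb (cvb sigmaB muB) nuB := (cvb_assoc _ _ _).symm
      _ = cvb (ebH (k := k)) nuB := by rw [cvb_sigma_mu]
      _ = nuB := cvb_unit_left _
  have h2 : sigmaB (k := k) x y = nuB (k := k) x y := by rw [hσ]
  simpa [sigmaB, nuB, LinearMap.compr₂_apply, LinearMap.compl₁₂_apply,
    LinearMap.flip_apply, LinearMap.mul_apply'] using h2

lemma antipode_inj (Sinv : H →ₗ[k] H) (hSinv_l : ∀ h : H, Sinv (𝐒 h) = h)
    {u v : H} (huv : 𝐒 u = 𝐒 v) : u = v := by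
  have h2 := DFunLike.congr_arg Sinv huv
  rw [hSinv_l u, hSinv_l v] at h2
  exact h2

lemma sinv_mul_right (Sinv : H →ₗ[k] H) (hSinv_l : ∀ h : H, Sinv (𝐒 h) = h)
    (hSinv_r : ∀ h : H, 𝐒 (Sinv h) = h) {x : H} {ι : Type*} (r : Coalgebra.Repr k x ι) :
    ∑ i ∈ r.index, r.right i * Sinv (r.left i) = Coalgebra.counit (R := k) x • 1 := by
  refine antipode_inj Sinv hSinv_l ?_
  rw [map_sum, map_smul, antipode_one']
  calc ∑ i ∈ r.index, 𝐒 (r.right i * Sinv (r.left i))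
      = ∑ i ∈ r.index, r.left i * 𝐒 (r.right i) := by
        refine Finset.sum_congr rfl fun i _ => ?_
        rw [antipode_mul', hSinv_r]
    _ = Coalgebra.counit (R := k) x • 1 := HopfAlgebra.sum_mul_antipode_eq_smul r

lemma sinv_mul_left (Sinv : H →ₗ[k] H) (hSinv_l : ∀ h : H, Sinv (𝐒 h) = h)
    (hSinv_r : ∀ h : H, 𝐒 (Sinv h) = h) {x : H} {ι : Type*} (r : Coalgebra.Repr k x ι) :
    ∑ i ∈ r.index, Sinv (r.right i) * r.left i = Coalgebra.counit (R := k) x • 1 := by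
  refine antipode_inj Sinv hSinv_l ?_
  rw [map_sum, map_smul, antipode_one']
  calc ∑ i ∈ r.index, 𝐒 (Sinv (r.right i) * r.left i)
      = ∑ i ∈ r.index, 𝐒 (r.left i) * r.right i := by
        refine Finset.sum_congr rfl fun i _ => ?_
        rw [antipode_mul', hSinv_r]
    _ = Coalgebra.counit (R := k) x • 1 := HopfAlgebra.sum_antipode_mul_eq_smul r

lemma conv_repr (f g : H →ₗ[k] k) {x : H} {ι : Type*} (r : Coalgebra.Repr k x ι) :
    conv f g x = ∑ i ∈ r.index, f (r.left i) * g (r.right i) := by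
  simp only [conv, LinearMap.comp_apply]
  rw [← r.eq, map_sum, map_sum]
  simp

lemma integral_right_elt (lam : H →ₗ[k] k)
    (hlam_int : ∀ f : H →ₗ[k] k, conv f lam = f 1 • lam) {x : H} {ι : Type*} (r : Coalgebra.Repr k x ι) :
    ∑ i ∈ r.index, lam (r.right i) • r.left i = lam x • 1 := by
  rw [← sub_eq_zero, ← Module.forall_dual_apply_eq_zero_iff k]
  intro φ
  rw [map_sub, sub_eq_zero]
  have h1 : conv φ lam x = φ 1 * lam x := by
    rw [hlam_int φ]; simp
  rw [conv_repr φ lam r] at h1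
  calc φ (∑ i ∈ r.index, lam (r.right i) • r.left i)
      = ∑ i ∈ r.index, φ (r.left i) * lam (r.right i) := by
        rw [map_sum]
        refine Finset.sum_congr rfl fun i _ => ?_
        rw [map_smul, smul_eq_mul, mul_comm]
    _ = φ 1 * lam x := h1
    _ = φ (lam x • 1) := by rw [map_smul, smul_eq_mul, mul_comm]

lemma lT_repr (f : H →ₗ[k] k) {z : H} {ι : Type*} (r : Coalgebra.Repr k z ι) :
    lT f z = ∑ i ∈ r.index, f (r.left i) • r.right i := by
  simp only [lT, LinearMap.comp_apply, LinearEquiv.coe_coe]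
  rw [← r.eq, map_sum, map_sum]
  simp

lemma identB (Sinv : H →ₗ[k] H) (hSinv_l : ∀ h : H, Sinv (𝐒 h) = h)
    (hSinv_r : ∀ h : H, 𝐒 (Sinv h) = h) (h : H) :
    ∑ i ∈ (ℛ k h).index, ∑ j ∈ (ℛ k ((ℛ k h).left i)).index,
      (ℛ k ((ℛ k h).left i)).left j ⊗ₜ[k]
        (Sinv ((ℛ k h).right i) * (ℛ k ((ℛ k h).left i)).right j)
      = h ⊗ₜ[k] (1 : H) := by
  have key := Coalgebra.sum_tmul_tmul_eq (R := k) (ℛ k h)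
    (fun i => ℛ k ((ℛ k h).left i)) (fun i => ℛ k ((ℛ k h).right i))
  have key2 := congrArg (LinearMap.lTensor H ((LinearMap.mul' k H)
    ∘ₗ (Sinv.rTensor H) ∘ₗ (TensorProduct.comm k H H).toLinearMap)) key
  simp only [map_sum, LinearMap.lTensor_tmul, LinearMap.comp_apply, LinearEquiv.coe_coe,
    TensorProduct.comm_tmul, LinearMap.rTensor_tmul, LinearMap.mul'_apply] at key2
  rw [key2]
  have h1 : ∀ i ∈ (ℛ k h).index,
      ∑ j ∈ (ℛ k ((ℛ k h).right i)).index,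
        (ℛ k h).left i ⊗ₜ[k]
          (Sinv ((ℛ k ((ℛ k h).right i)).right j) * (ℛ k ((ℛ k h).right i)).left j)
      = Coalgebra.counit (R := k) ((ℛ k h).right i) • ((ℛ k h).left i ⊗ₜ[k] (1 : H)) := by
    intro i _
    rw [← TensorProduct.tmul_sum, sinv_mul_left Sinv hSinv_l hSinv_r (ℛ k ((ℛ k h).right i)),
      TensorProduct.tmul_smul]
  rw [Finset.sum_congr rfl h1]
  simp only [TensorProduct.smul_tmul']
  rw [← TensorProduct.sum_tmul, sum_counit_smul_left (ℛ k h)]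

lemma identA (Sinv : H →ₗ[k] H) (hSinv_l : ∀ h : H, Sinv (𝐒 h) = h)
    (hSinv_r : ∀ h : H, 𝐒 (Sinv h) = h) (h : H) :
    ∑ i ∈ (ℛ k h).index, ∑ j ∈ (ℛ k ((ℛ k h).right i)).index,
      ((ℛ k ((ℛ k h).right i)).left j * Sinv ((ℛ k h).left i)) ⊗ₜ[k]
        (ℛ k ((ℛ k h).right i)).right j
      = (1 : H) ⊗ₜ[k] h := by
  have key := Coalgebra.sum_tmul_tmul_eq (R := k) (ℛ k h)
    (fun i => ℛ k ((ℛ k h).left i)) (fun i => ℛ k ((ℛ k h).right i))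
  have key2 := congrArg ((((LinearMap.mul' k H) ∘ₗ (LinearMap.lTensor H Sinv)
      ∘ₗ (TensorProduct.comm k H H).toLinearMap).rTensor H)
    ∘ₗ (TensorProduct.assoc k H H H).symm.toLinearMap) key
  simp only [map_sum, LinearMap.comp_apply, LinearEquiv.coe_coe, TensorProduct.assoc_symm_tmul,
    LinearMap.rTensor_tmul, TensorProduct.comm_tmul, LinearMap.lTensor_tmul,
    LinearMap.mul'_apply] at key2
  rw [← key2]
  have h1 : ∀ i ∈ (ℛ k h).index,
      ∑ j ∈ (ℛ k ((ℛ k h).left i)).index,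
        ((ℛ k ((ℛ k h).left i)).right j * Sinv ((ℛ k ((ℛ k h).left i)).left j)) ⊗ₜ[k]
          (ℛ k h).right i
      = Coalgebra.counit (R := k) ((ℛ k h).left i) • ((1 : H) ⊗ₜ[k] (ℛ k h).right i) := by
    intro i _
    rw [← TensorProduct.sum_tmul, sinv_mul_right Sinv hSinv_l hSinv_r (ℛ k ((ℛ k h).left i)),
      TensorProduct.smul_tmul']
  rw [Finset.sum_congr rfl h1]
  simp only [← TensorProduct.tmul_smul]
  rw [← TensorProduct.tmul_sum, sum_counit_smul_right (ℛ k h)]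

/-- `(c ⊗ w) ↦ ∑ lam (c * l₁) • (w * l₂)`. -/
noncomputable def Cmap (lam : H →ₗ[k] k) (l : H) : H ⊗[k] H →ₗ[k] H :=
  ((TensorProduct.lid k H).toLinearMap
    ∘ₗ (TensorProduct.map (lam ∘ₗ LinearMap.mul' k H) (LinearMap.mul' k H))
    ∘ₗ (TensorProduct.tensorTensorTensorComm k H H H H).toLinearMap)
    ∘ₗ ((TensorProduct.mk k (H ⊗[k] H) (H ⊗[k] H)).flip (Coalgebra.comul (R := k) l))

lemma Cmap_tmul (lam : H →ₗ[k] k) (l : H) {ι : Type*} (rl : Coalgebra.Repr k l ι) (c w : H) :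
    Cmap lam l (c ⊗ₜ[k] w)
      = ∑ m ∈ rl.index, lam (c * rl.left m) • (w * rl.right m) := by
  simp only [Cmap, LinearMap.comp_apply, LinearMap.flip_apply, TensorProduct.mk_apply]
  rw [← rl.eq, TensorProduct.tmul_sum, map_sum]
  simp [TensorProduct.tensorTensorTensorComm_tmul]

/-- `(c ⊗ d) ↦ ∑ lam (l₂ * d) • (l₁ * c)`. -/
noncomputable def Dmap (lam : H →ₗ[k] k) (l : H) : H ⊗[k] H →ₗ[k] H :=
  ((TensorProduct.rid k H).toLinearMap
    ∘ₗ (TensorProduct.map ((LinearMap.mul' k H) ∘ₗ (TensorProduct.comm k H H).toLinearMap)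
        (lam ∘ₗ (LinearMap.mul' k H) ∘ₗ (TensorProduct.comm k H H).toLinearMap))
    ∘ₗ (TensorProduct.tensorTensorTensorComm k H H H H).toLinearMap)
    ∘ₗ ((TensorProduct.mk k (H ⊗[k] H) (H ⊗[k] H)).flip (Coalgebra.comul (R := k) l))

lemma Dmap_tmul (lam : H →ₗ[k] k) (l : H) {ι : Type*} (rl : Coalgebra.Repr k l ι) (c d : H) :
    Dmap lam l (c ⊗ₜ[k] d)
      = ∑ m ∈ rl.index, lam (rl.right m * d) • (rl.left m * c) := by
  simp only [Dmap, LinearMap.comp_apply, LinearMap.flip_apply, TensorProduct.mk_apply]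
  rw [← rl.eq, TensorProduct.tmul_sum, map_sum]
  simp [TensorProduct.tensorTensorTensorComm_tmul]

lemma main1 (lam : H →ₗ[k] k) (a : H)
    (ha_mod : ∀ z : H, lT lam z = lam z • (𝐒 a))
    (Sinv : H →ₗ[k] H) (hSinv_l : ∀ h : H, Sinv (𝐒 h) = h)
    (hSinv_r : ∀ h : H, 𝐒 (Sinv h) = h) (h l : H) :
    ∑ m ∈ (ℛ k l).index, lam (h * (ℛ k l).left m) • (ℛ k l).right m
      = ∑ i ∈ (ℛ k h).index,
          lam ((ℛ k h).left i * l) • (Sinv ((ℛ k h).right i) * 𝐒 a) := by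
  have e1 : Cmap lam l (h ⊗ₜ[k] (1 : H))
      = ∑ m ∈ (ℛ k l).index, lam (h * (ℛ k l).left m) • (ℛ k l).right m := by
    rw [Cmap_tmul lam l (ℛ k l)]
    simp only [one_mul]
  rw [← e1, ← identB Sinv hSinv_l hSinv_r h, map_sum]
  refine Finset.sum_congr rfl fun i _ => ?_
  rw [map_sum]
  simp only [Cmap_tmul lam l (ℛ k l)]
  have step : ∀ (b c : H) (r : k),
      r • ((Sinv ((ℛ k h).right i) * b) * c) = Sinv ((ℛ k h).right i) * (r • (b * c)) := by
    intro b c r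
    rw [mul_assoc, mul_smul_comm]
  simp only [step]
  simp only [← Finset.mul_sum]
  have hinner := (lT_repr lam (reprMul (ℛ k ((ℛ k h).left i)) (ℛ k l))).symm.trans
    (ha_mod ((ℛ k h).left i * l))
  simp only [reprMul] at hinner
  rw [Finset.sum_product] at hinner
  rw [hinner, mul_smul_comm]

lemma main2 (lam : H →ₗ[k] k)
    (hlam_int : ∀ f : H →ₗ[k] k, conv f lam = f 1 • lam)
    (Sinv : H →ₗ[k] H) (hSinv_l : ∀ h : H, Sinv (𝐒 h) = h)
    (hSinv_r : ∀ h : H, 𝐒 (Sinv h) = h) (h l : H) :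
    ∑ m ∈ (ℛ k l).index, lam ((ℛ k l).right m * h) • (ℛ k l).left m
      = ∑ i ∈ (ℛ k h).index, lam (l * (ℛ k h).right i) • Sinv ((ℛ k h).left i) := by
  have e1 : Dmap lam l ((1 : H) ⊗ₜ[k] h)
      = ∑ m ∈ (ℛ k l).index, lam ((ℛ k l).right m * h) • (ℛ k l).left m := by
    rw [Dmap_tmul lam l (ℛ k l)]
    simp only [mul_one]
  rw [← e1, ← identA Sinv hSinv_l hSinv_r h, map_sum]
  refine Finset.sum_congr rfl fun i _ => ?_
  rw [map_sum]
  simp only [Dmap_tmul lam l (ℛ k l)]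
  have step : ∀ (b c : H) (r : k),
      r • (b * (c * Sinv ((ℛ k h).left i))) = (r • (b * c)) * Sinv ((ℛ k h).left i) := by
    intro b c r
    rw [← mul_assoc, ← smul_mul_assoc]
  simp only [step]
  simp only [← Finset.sum_mul]
  have h0 := integral_right_elt lam hlam_int (reprMul (ℛ k l) (ℛ k ((ℛ k h).right i)))
  simp only [reprMul] at h0
  rw [Finset.sum_product] at h0
  rw [Finset.sum_comm.trans h0, smul_mul_assoc, one_mul]

/-- For every $p ∈ H^*$ and all $h, l ∈ H$:
$λ(h l_1) p(l_2) = p(S^{-1}(h_2) a^{-1}) λ(h_1 l)$ and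
$p(l_1) λ(l_2 h) = p(S^{-1}(h_1)) λ(l h_2)$. -/
theorem integral_convolution_shift
    (lam : H →ₗ[k] k) (hlam_ne : lam ≠ 0)
    (hlam_int : ∀ f : H →ₗ[k] k, conv f lam = f 1 • lam)
    (a : H) (ha_ne : a ≠ 0) (ha_grp : Coalgebra.comul (R := k) a = a ⊗ₜ[k] a)
    (ha_mod : ∀ h : H, lT lam h = lam h • (𝐒 a))
    (ha_S2 : ∀ h : H, lam (𝐒 (𝐒 h)) = lam (a * h * 𝐒 a))
    (Sinv : H →ₗ[k] H) (hSinv_l : ∀ h : H, Sinv (𝐒 h) = h)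
    (hSinv_r : ∀ h : H, 𝐒 (Sinv h) = h) :
    ∀ (p : H →ₗ[k] k) (h l : H),
      (conv (lam ∘ₗ LinearMap.mulLeft k h) p l =
        conv (lam ∘ₗ LinearMap.mulRight k l)
          (p ∘ₗ (LinearMap.mulRight k (𝐒 a)) ∘ₗ Sinv) h) ∧
      (conv p (lam ∘ₗ LinearMap.mulRight k h) l =
        conv (p ∘ₗ Sinv) (lam ∘ₗ LinearMap.mulLeft k l) h) := by
  intro p h l
  constructor
  · have hm := congrArg p (main1 lam a ha_mod Sinv hSinv_l hSinv_r h l)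
    simp only [map_sum, map_smul, smul_eq_mul] at hm
    rw [conv_repr _ p (ℛ k l), conv_repr _ _ (ℛ k h)]
    simp only [LinearMap.comp_apply, LinearMap.mulLeft_apply, LinearMap.mulRight_apply]
    exact hm
  · have hm := congrArg p (main2 lam hlam_int Sinv hSinv_l hSinv_r h l)
    simp only [map_sum, map_smul, smul_eq_mul] at hm
    rw [conv_repr p _ (ℛ k l), conv_repr _ _ (ℛ k h)]
    simp only [LinearMap.comp_apply, LinearMap.mulLeft_apply, LinearMap.mulRight_apply]
    exact Eq.trans (Finset.sum_congr rfl fun m _ => mul_comm _ _)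
      (hm.trans (Finset.sum_congr rfl fun i _ => mul_comm _ _))
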